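/- Let f : ℝ^d → ℝ be convex, differentiable, with L-Lipschitz gradient. Suppose M nodes each run SGD from the same point x_r: y_{m,r,0} = x_r and y_{m,r,h+1} = y_{m,r,h} − η g_{m,r,h}, with unbiased stochastic gradients of variance at most σ², independent across nodes. If η ≤ 1/L, then for all h, E[(1/M²) Σ_{m=1}^M Σ_{s=1}^M ‖y_{m,r,h} − y_{s,r,h}‖²] ≤ 2η²σ²h. -/

import Mathlib

open MeasureTheory Finset
open scoped RealInnerProductSpace

variable {E : Type*} [NormedAddCommGroup E] [InnerProductSpace ℝ E] [CompleteSpace E]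

lemma line_hasDerivAt (f : E → ℝ) (hdiff : Differentiable ℝ f) (x v : E) (t : ℝ) :
    HasDerivAt (fun s : ℝ => f (x + s • v)) ⟪gradient f (x + t • v), v⟫ t := by
  have hc : HasDerivAt (fun s : ℝ => x + s • v) v t := by
    simpa using ((hasDerivAt_id t).smul_const v).const_add x
  have hg : HasFDerivAt f ((InnerProductSpace.toDual ℝ E) (gradient f (x + t • v))) (x + t • v) :=
    (hasGradientAt_iff_hasFDerivAt.mp (hdiff (x + t • v)).hasGradientAt)
  convert hg.comp_hasDerivAt t hc using 1
  · rfl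
  · rfl
  · rfl
  · rw [InnerProductSpace.toDual_apply_apply]

lemma convex_grad_le (f : E → ℝ) (hconv : ConvexOn ℝ Set.univ f) (hdiff : Differentiable ℝ f)
    (x y : E) : f x + ⟪gradient f x, y - x⟫ ≤ f y := by
  set v := y - x with hv
  have hφconv : ConvexOn ℝ Set.univ fun s : ℝ => f (x + s • v) := by
    have := hconv.comp_affineMap
      (AffineMap.const ℝ ℝ x + (LinearMap.toAffineMap (LinearMap.toSpanSingleton ℝ E v)))
    simpa [Function.comp_def] using this
  have hder : HasDerivAt (fun s : ℝ => f (x + s • v)) ⟪gradient f x, v⟫ 0 := by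
    have := line_hasDerivAt f hdiff x v 0
    simpa using this
  have hs := hφconv.le_slope_of_hasDerivAt (Set.mem_univ (0:ℝ)) (Set.mem_univ (1:ℝ))
    one_pos hder
  rw [slope_def_field] at hs
  have hs' : ⟪gradient f x, v⟫ ≤ f y - f x := by
    simpa [hv, add_sub_cancel] using hs
  linarith

lemma gradient_continuous (f : E → ℝ) {L : ℝ} (hL : 0 < L)
    (hlip : ∀ x y, ‖gradient f x - gradient f y‖ ≤ L * ‖x - y‖) :
    Continuous (gradient f) := by
  have : LipschitzWith (Real.toNNReal L) (gradient f) := by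
    apply LipschitzWith.of_dist_le_mul
    intro x y
    rw [dist_eq_norm, dist_eq_norm]
    calc ‖gradient f x - gradient f y‖ ≤ L * ‖x - y‖ := hlip x y
    _ = (Real.toNNReal L : ℝ) * ‖x - y‖ := by rw [Real.coe_toNNReal _ hL.le]
  exact this.continuous

lemma descent_lemma (f : E → ℝ) (hdiff : Differentiable ℝ f) {L : ℝ} (hL : 0 < L)
    (hlip : ∀ x y, ‖gradient f x - gradient f y‖ ≤ L * ‖x - y‖) (x y : E) :
    f y ≤ f x + ⟪gradient f x, y - x⟫ + L / 2 * ‖y - x‖ ^ 2 := by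
  set v := y - x with hv
  have hcontg : Continuous fun t : ℝ => gradient f (x + t • v) :=
    (gradient_continuous f hL hlip).comp
      (continuous_const.add (continuous_id.smul continuous_const))
  have hcont : Continuous fun t : ℝ => ⟪gradient f (x + t • v), v⟫ :=
    hcontg.inner continuous_const
  have hftc : ∫ t in (0:ℝ)..1, ⟪gradient f (x + t • v), v⟫ = f y - f x := by
    have := intervalIntegral.integral_eq_sub_of_hasDerivAt
      (f := fun s : ℝ => f (x + s • v))
      (f' := fun t : ℝ => ⟪gradient f (x + t • v), v⟫)
      (a := 0) (b := 1)
      (fun t _ => line_hasDerivAt f hdiff x v t)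
      (hcont.intervalIntegrable 0 1)
    rw [this]
    norm_num [hv, add_sub_cancel]
  have hmono : ∫ t in (0:ℝ)..1, ⟪gradient f (x + t • v) - gradient f x, v⟫
      ≤ ∫ t in (0:ℝ)..1, L * ‖v‖ ^ 2 * t := by
    apply intervalIntegral.integral_mono_on (by norm_num)
    · exact ((hcontg.sub continuous_const).inner continuous_const).intervalIntegrable 0 1
    · exact (continuous_const.mul continuous_id).intervalIntegrable 0 1
    · intro t ht
      rw [Set.mem_Icc] at ht
      calc ⟪gradient f (x + t • v) - gradient f x, v⟫
          ≤ ‖gradient f (x + t • v) - gradient f x‖ * ‖v‖ := real_inner_le_norm _ _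
        _ ≤ (L * ‖x + t • v - x‖) * ‖v‖ := by
            have := hlip (x + t • v) x
            exact mul_le_mul_of_nonneg_right this (norm_nonneg _)
        _ = L * ‖v‖ ^ 2 * t := by
            rw [add_sub_cancel_left, norm_smul, Real.norm_eq_abs, abs_of_nonneg ht.1]
            ring
  have hsplit : ∫ t in (0:ℝ)..1, ⟪gradient f (x + t • v) - gradient f x, v⟫
      = (f y - f x) - ⟪gradient f x, v⟫ := by
    have : ∀ t : ℝ, ⟪gradient f (x + t • v) - gradient f x, v⟫
        = ⟪gradient f (x + t • v), v⟫ - ⟪gradient f x, v⟫ := fun t => inner_sub_left _ _ _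
    simp_rw [this]
    rw [intervalIntegral.integral_sub (hcont.intervalIntegrable 0 1)
      (intervalIntegrable_const), hftc]
    simp
  have hval : ∫ t in (0:ℝ)..1, L * ‖v‖ ^ 2 * t = L * ‖v‖ ^ 2 / 2 := by
    rw [intervalIntegral.integral_const_mul, integral_id]
    ring
  rw [hsplit, hval] at hmono
  have hvy : v = y - x := hv
  nlinarith [hmono]

lemma lower_quad (f : E → ℝ) (hconv : ConvexOn ℝ Set.univ f) (hdiff : Differentiable ℝ f)
    {L : ℝ} (hL : 0 < L) (hlip : ∀ x y, ‖gradient f x - gradient f y‖ ≤ L * ‖x - y‖)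
    (x y : E) :
    f x + ⟪gradient f x, y - x⟫ + 1 / (2 * L) * ‖gradient f y - gradient f x‖ ^ 2 ≤ f y := by
  set Δ := gradient f y - gradient f x with hΔ
  set z := y - (1 / L) • Δ with hz
  have h1 : f x + ⟪gradient f x, z - x⟫ ≤ f z := convex_grad_le f hconv hdiff x z
  have h2 : f z ≤ f y + ⟪gradient f y, z - y⟫ + L / 2 * ‖z - y‖ ^ 2 :=
    descent_lemma f hdiff hL hlip y z
  have hzy : z - y = -((1 / L) • Δ) := by rw [hz]; abel
  have e1 : ⟪gradient f y, z - y⟫ = -(1 / L) * ⟪gradient f y, Δ⟫ := by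
    rw [hzy, inner_neg_right, real_inner_smul_right]; ring
  have e2 : ‖z - y‖ ^ 2 = (1 / L) ^ 2 * ‖Δ‖ ^ 2 := by
    rw [hzy, norm_neg, norm_smul, Real.norm_eq_abs, mul_pow, sq_abs]
  have e3 : ⟪gradient f x, z - x⟫ = ⟪gradient f x, y - x⟫ - (1 / L) * ⟪gradient f x, Δ⟫ := by
    have : z - x = (y - x) - (1 / L) • Δ := by rw [hz]; abel
    rw [this, inner_sub_right, real_inner_smul_right]
  have e4 : ⟪gradient f y, Δ⟫ - ⟪gradient f x, Δ⟫ = ‖Δ‖ ^ 2 := by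
    rw [← inner_sub_left, ← hΔ, real_inner_self_eq_norm_sq]
  have hL' : L ≠ 0 := hL.ne'
  rw [e1, e2] at h2
  rw [e3] at h1
  have e5 : 1 / (2 * L) * ‖Δ‖ ^ 2 = (1/L) * ‖Δ‖^2 - L/2 * ((1/L)^2 * ‖Δ‖^2) := by
    field_simp; ring
  have e4' : (1/L) * ⟪gradient f y, Δ⟫ - (1/L) * ⟪gradient f x, Δ⟫ = (1/L) * ‖Δ‖^2 := by
    rw [← mul_sub, e4]
  linarith [h1, h2, e4', e5]

lemma cocoercive (f : E → ℝ) (hconv : ConvexOn ℝ Set.univ f) (hdiff : Differentiable ℝ f)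
    {L : ℝ} (hL : 0 < L) (hlip : ∀ x y, ‖gradient f x - gradient f y‖ ≤ L * ‖x - y‖)
    (x y : E) :
    1 / L * ‖gradient f x - gradient f y‖ ^ 2 ≤ ⟪gradient f x - gradient f y, x - y⟫ := by
  have h1 := lower_quad f hconv hdiff hL hlip x y
  have h2 := lower_quad f hconv hdiff hL hlip y x
  have e1 : ‖gradient f x - gradient f y‖ = ‖gradient f y - gradient f x‖ := by
    rw [norm_sub_rev]
  have e2 : ⟪gradient f x, y - x⟫ = -⟪gradient f x, x - y⟫ := by
    rw [← inner_neg_right]; congr 1; abel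
  have e3 : ⟪gradient f y, x - y⟫ = ⟪gradient f y, x - y⟫ := rfl
  have e4 : ⟪gradient f x - gradient f y, x - y⟫
      = ⟪gradient f x, x - y⟫ - ⟪gradient f y, x - y⟫ := inner_sub_left _ _ _
  have h2' : ‖gradient f x - gradient f y‖ ^ 2 = ‖gradient f y - gradient f x‖ ^ 2 := by
    rw [e1]
  have e6 : 1 / (2 * L) * ‖gradient f y - gradient f x‖ ^ 2
      + 1 / (2 * L) * ‖gradient f x - gradient f y‖ ^ 2
      = 1 / L * ‖gradient f x - gradient f y‖ ^ 2 := by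
    rw [h2']; field_simp; ring
  rw [e4]
  have e7 : ⟪gradient f y, x - y⟫ = -⟪gradient f y, y - x⟫ := by
    rw [← inner_neg_right]; congr 1; abel
  linarith [h1, h2, e2, e6, e7]

lemma contraction (f : E → ℝ) (hconv : ConvexOn ℝ Set.univ f) (hdiff : Differentiable ℝ f)
    {L η : ℝ} (hL : 0 < L) (hlip : ∀ x y, ‖gradient f x - gradient f y‖ ≤ L * ‖x - y‖)
    (hη0 : 0 < η) (hη : η ≤ 1 / L) (x y : E) :
    ‖(x - y) - η • (gradient f x - gradient f y)‖ ^ 2 ≤ ‖x - y‖ ^ 2 := by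
  have hco := cocoercive f hconv hdiff hL hlip x y
  rw [norm_sub_sq_real]
  have e1 : ⟪x - y, η • (gradient f x - gradient f y)⟫
      = η * ⟪gradient f x - gradient f y, x - y⟫ := by
    rw [real_inner_smul_right, real_inner_comm]
  have e2 : ‖η • (gradient f x - gradient f y)‖ ^ 2 = η ^ 2 * ‖gradient f x - gradient f y‖ ^ 2 := by
    rw [norm_smul, Real.norm_eq_abs, mul_pow, sq_abs]
  rw [e1, e2]
  have h3 : η * ‖gradient f x - gradient f y‖ ^ 2 ≤ ⟪gradient f x - gradient f y, x - y⟫ := by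
    calc η * ‖gradient f x - gradient f y‖ ^ 2 ≤ 1 / L * ‖gradient f x - gradient f y‖ ^ 2 := by
          apply mul_le_mul_of_nonneg_right hη (by positivity)
      _ ≤ _ := hco
  nlinarith [sq_nonneg ‖gradient f x - gradient f y‖, h3]

section Prob
variable {Ω : Type*} {m m0 : MeasurableSpace Ω} {μ : MeasureTheory.Measure Ω}

lemma condexp_ae_eq_condexpL2' (hm : m ≤ m0) [IsFiniteMeasure μ] {F : Ω → E}
    (hF : MemLp F 2 μ) :
    μ[F|m] =ᵐ[μ] (condExpL2 E ℝ hm (hF.toLp F) : Ω →₂[μ] E) := by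
  haveI : SigmaFinite (μ.trim hm) := by
    haveI := isFiniteMeasure_trim hm (μ := μ)
    infer_instance
  refine (ae_eq_condExp_of_forall_setIntegral_eq hm (hF.integrable one_le_two)
    (fun s hs hμs => (integrable_condExpL2_of_isFiniteMeasure hm).integrableOn)
    (fun s hs hμs => ?_)
    (aestronglyMeasurable_condExpL2 hm _)).symm
  rw [integral_condExpL2_eq hm (hF.toLp F) hs hμs.ne]
  exact setIntegral_congr_ae (hm s hs) (hF.coeFn_toLp.mono fun x hx _ => hx)

lemma memℒp_two_condexp (hm : m ≤ m0) [IsFiniteMeasure μ] {F : Ω → E}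
    (hF : MemLp F 2 μ) : MemLp (μ[F|m]) 2 μ :=
  (Lp.memLp _).ae_eq (condexp_ae_eq_condexpL2' hm hF).symm

lemma integral_inner_eq_zero_of_condexp_eq_zero (hm : m ≤ m0) [IsFiniteMeasure μ]
    {W Z : Ω → E} (hW : MemLp W 2 μ) (hWm : AEStronglyMeasurable[m] W μ)
    (hZ : MemLp Z 2 μ) (hZ0 : μ[Z|m] =ᵐ[μ] 0) :
    ∫ ω, ⟪W ω, Z ω⟫ ∂μ = 0 := by
  set W' := hW.toLp W with hW'
  set Z' := hZ.toLp Z with hZ'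
  have hcz : (condExpL2 E ℝ hm Z' : Ω →₂[μ] E) =ᵐ[μ] 0 :=
    ((condexp_ae_eq_condexpL2' hm hZ).symm.trans hZ0)
  have hWm' : AEStronglyMeasurable[m] (W' : Ω → E) μ :=
    hWm.congr hW.coeFn_toLp.symm
  have key : (inner (𝕜 := ℝ) ((condExpL2 E ℝ hm Z' : Ω →₂[μ] E)) W') = inner (𝕜 := ℝ) Z' W' :=
    inner_condExpL2_eq_inner_fun hm Z' W' hWm'
  have hzero : (inner (𝕜 := ℝ) ((condExpL2 E ℝ hm Z' : Ω →₂[μ] E)) W') = 0 := by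
    rw [L2.inner_def]
    rw [integral_congr_ae (g := fun _ => (0:ℝ)) ?_]
    · simp
    · filter_upwards [hcz] with ω hω
      rw [hω]
      simp
  have : ∫ ω, ⟪(Z' : Ω → E) ω, (W' : Ω → E) ω⟫ ∂μ = 0 := by
    rw [← L2.inner_def, ← key, hzero]
  rw [integral_congr_ae (g := fun ω => ⟪(Z' : Ω → E) ω, (W' : Ω → E) ω⟫) ?_]
  · exact this
  · filter_upwards [hW.coeFn_toLp, hZ.coeFn_toLp] with ω h1 h2
    rw [h1, h2, real_inner_comm]

lemma integrable_inner_of_memℒp_two {F G : Ω → E} (hF : MemLp F 2 μ) (hG : MemLp G 2 μ) :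
    Integrable (fun ω => ⟪F ω, G ω⟫) μ := by
  have := L2.integrable_inner (𝕜 := ℝ) (hF.toLp F) (hG.toLp G)
  refine this.congr ?_
  filter_upwards [hF.coeFn_toLp, hG.coeFn_toLp] with ω h1 h2
  rw [h1, h2]

lemma integrable_norm_sq_of_memℒp_two {F : Ω → E} (hF : MemLp F 2 μ) :
    Integrable (fun ω => ‖F ω‖ ^ 2) μ := by
  refine (integrable_inner_of_memℒp_two hF hF).congr ?_
  filter_upwards [] with ω
  rw [real_inner_self_eq_norm_sq]

end Prob

/-- Client drift bound: if `M` nodes run SGD from the same (random) starting point with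
stepsize `η ≤ 1/L` on a convex `L`-smooth `f`, with conditionally unbiased stochastic
gradients of variance at most `σ²`, independent across nodes, then for all `h`,
`E[(1/M²) Σ_{m,s} ‖y_{m,h} − y_{s,h}‖²] ≤ 2η²σ²h`. -/
theorem client_drift_bound
    {d : ℕ} {Ω : Type} [mΩ : MeasurableSpace Ω] (μ : Measure Ω) [IsProbabilityMeasure μ]
    (f : EuclideanSpace ℝ (Fin d) → ℝ) (L σ η : ℝ) (M : ℕ) (hM : 0 < M)
    (hconv : ConvexOn ℝ Set.univ f) (hdiff : Differentiable ℝ f) (hL : 0 < L)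
    (hlip : ∀ x y, ‖gradient f x - gradient f y‖ ≤ L * ‖x - y‖)
    (hσ : 0 ≤ σ) (hη0 : 0 < η) (hη : η ≤ 1 / L)
    (X : Ω → EuclideanSpace ℝ (Fin d))
    (y g : Fin M → ℕ → Ω → EuclideanSpace ℝ (Fin d))
    (ℱ : Filtration ℕ mΩ)
    (hy0 : ∀ m, y m 0 = X)
    (hyrec : ∀ m h, y m (h + 1) = fun ω => y m h ω - η • g m h ω)
    (hadapt : ∀ m h, StronglyMeasurable[ℱ h] (y m h))
    (hgmeas : ∀ m h, StronglyMeasurable[ℱ (h + 1)] (g m h))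
    (hL2 : ∀ m h, MemLp (g m h) 2 μ)
    (hunbiased : ∀ m h, μ[g m h | ℱ h] =ᵐ[μ] fun ω => gradient f (y m h ω))
    (hvar : ∀ m h, ∫ ω, ‖g m h ω - gradient f (y m h ω)‖ ^ 2 ∂μ ≤ σ ^ 2)
    (hindep : ∀ m s h, m ≠ s →
      μ[(fun ω => ⟪g m h ω - gradient f (y m h ω),
                   g s h ω - gradient f (y s h ω)⟫) | ℱ h] =ᵐ[μ] 0) :
    ∀ h : ℕ, ∫ ω, ((M : ℝ) ^ 2)⁻¹ * ∑ m, ∑ s, ‖y m h ω - y s h ω‖ ^ 2 ∂μ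
      ≤ 2 * η ^ 2 * σ ^ 2 * h := by
  have hsig : ∀ h : ℕ, SigmaFinite (μ.trim (ℱ.le h)) := fun h => by
    haveI := isFiniteMeasure_trim (μ := μ) (ℱ.le h)
    infer_instance
  have hgc : Continuous (gradient f) := gradient_continuous f hL hlip
  have hgradmeas : ∀ (m : Fin M) (h : ℕ),
      StronglyMeasurable[ℱ h] (fun ω => gradient f (y m h ω)) :=
    fun m h => hgc.comp_stronglyMeasurable (hadapt m h)
  have hgradL2 : ∀ (m : Fin M) (h : ℕ), MemLp (fun ω => gradient f (y m h ω)) 2 μ :=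
    fun m h => (memℒp_two_condexp (ℱ.le h) (hL2 m h)).ae_eq (hunbiased m h)
  have hξL2 : ∀ (m : Fin M) (h : ℕ),
      MemLp (fun ω => g m h ω - gradient f (y m h ω)) 2 μ :=
    fun m h => (hL2 m h).sub (hgradL2 m h)
  have hξ0 : ∀ (m : Fin M) (h : ℕ),
      μ[(fun ω => g m h ω - gradient f (y m h ω))|ℱ h] =ᵐ[μ] 0 := by
    intro m h
    haveI := hsig h
    have h1 : μ[(fun ω => g m h ω - gradient f (y m h ω))|ℱ h]
        =ᵐ[μ] μ[g m h|ℱ h] - μ[(fun ω => gradient f (y m h ω))|ℱ h] :=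
      condExp_sub ((hL2 m h).integrable one_le_two) ((hgradL2 m h).integrable one_le_two) _
    have h2 : μ[(fun ω => gradient f (y m h ω))|ℱ h] = fun ω => gradient f (y m h ω) :=
      condExp_of_stronglyMeasurable (ℱ.le h) (hgradmeas m h)
        ((hgradL2 m h).integrable one_le_two)
    filter_upwards [h1, hunbiased m h] with ω hω1 hω2
    rw [hω1]
    simp [h2, hω2]
  have key : ∀ h : ℕ, ∀ m s : Fin M,
      MemLp (fun ω => y m h ω - y s h ω) 2 μ ∧
      ∫ ω, ‖y m h ω - y s h ω‖ ^ 2 ∂μ ≤ 2 * η ^ 2 * σ ^ 2 * h := by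
    intro h
    induction h with
    | zero =>
      intro m s
      have hz : (fun ω => y m 0 ω - y s 0 ω) = fun _ => (0 : EuclideanSpace ℝ (Fin d)) := by
        funext ω; rw [hy0 m, hy0 s, sub_self]
      refine ⟨hz ▸ memLp_const 0, ?_⟩
      have e0 : ∀ ω : Ω, ‖y m 0 ω - y s 0 ω‖ ^ 2 = 0 := by
        intro ω; rw [hy0 m, hy0 s]; simp
      rw [integral_congr_ae (Filter.Eventually.of_forall e0), integral_zero]
      simp
    | succ h ih =>
      intro m s
      rcases eq_or_ne m s with rfl | hms
      · have hz : (fun ω => y m (h+1) ω - y m (h+1) ω)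
            = fun _ => (0 : EuclideanSpace ℝ (Fin d)) := by funext ω; rw [sub_self]
        refine ⟨hz ▸ memLp_const 0, ?_⟩
        have e0 : ∀ ω : Ω, ‖y m (h+1) ω - y m (h+1) ω‖ ^ 2 = 0 := by intro ω; simp
        rw [integral_congr_ae (Filter.Eventually.of_forall e0), integral_zero]
        positivity
      obtain ⟨ihmem, ihint⟩ := ih m s
      set u : Ω → EuclideanSpace ℝ (Fin d) := fun ω => y m h ω - y s h ω with hu
      set v : Ω → EuclideanSpace ℝ (Fin d) :=
        fun ω => gradient f (y m h ω) - gradient f (y s h ω) with hv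
      set W : Ω → EuclideanSpace ℝ (Fin d) := fun ω => u ω - η • v ω with hW
      set Z : Ω → EuclideanSpace ℝ (Fin d) :=
        fun ω => (g m h ω - gradient f (y m h ω)) - (g s h ω - gradient f (y s h ω)) with hZ
      have hvmem : MemLp v 2 μ := (hgradL2 m h).sub (hgradL2 s h)
      have hWmem : MemLp W 2 μ := ihmem.sub (hvmem.const_smul η)
      have hZmem : MemLp Z 2 μ := (hξL2 m h).sub (hξL2 s h)
      have hWsm : StronglyMeasurable[ℱ h] W :=
        ((hadapt m h).sub (hadapt s h)).sub
          (((hgradmeas m h).sub (hgradmeas s h)).const_smul η)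
      have hZ0 : μ[Z|ℱ h] =ᵐ[μ] 0 := by
        haveI := hsig h
        have h1 : μ[Z|ℱ h] =ᵐ[μ] μ[(fun ω => g m h ω - gradient f (y m h ω))|ℱ h]
            - μ[(fun ω => g s h ω - gradient f (y s h ω))|ℱ h] :=
          condExp_sub ((hξL2 m h).integrable one_le_two) ((hξL2 s h).integrable one_le_two) _
        filter_upwards [h1, hξ0 m h, hξ0 s h] with ω hω1 hω2 hω3
        rw [hω1]
        simp only [Pi.sub_apply, hω2, hω3, sub_zero, Pi.zero_apply]
      have hdiffrec : (fun ω => y m (h+1) ω - y s (h+1) ω) = fun ω => W ω - η • Z ω := by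
        funext ω
        rw [hyrec m h, hyrec s h]
        simp only [hW, hZ, hu, hv]
        module
      have hint_u : Integrable (fun ω => ‖u ω‖ ^ 2) μ := integrable_norm_sq_of_memℒp_two ihmem
      have hint_W : Integrable (fun ω => ‖W ω‖ ^ 2) μ := integrable_norm_sq_of_memℒp_two hWmem
      have hint_Z : Integrable (fun ω => ‖Z ω‖ ^ 2) μ := integrable_norm_sq_of_memℒp_two hZmem
      have hint_WZ : Integrable (fun ω => ⟪W ω, Z ω⟫) μ :=
        integrable_inner_of_memℒp_two hWmem hZmem
      have hcross : ∫ ω, ⟪W ω, Z ω⟫ ∂μ = 0 :=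
        integral_inner_eq_zero_of_condexp_eq_zero (ℱ.le h) hWmem
          (hWsm.aestronglyMeasurable) hZmem hZ0
      have hWle : ∫ ω, ‖W ω‖ ^ 2 ∂μ ≤ ∫ ω, ‖u ω‖ ^ 2 ∂μ := by
        refine integral_mono hint_W hint_u ?_
        intro ω
        exact contraction f hconv hdiff hL hlip hη0 hη (y m h ω) (y s h ω)
      have hZle : ∫ ω, ‖Z ω‖ ^ 2 ∂μ ≤ 2 * σ ^ 2 := by
        have hc2 : ∫ ω, ⟪g m h ω - gradient f (y m h ω),
            g s h ω - gradient f (y s h ω)⟫ ∂μ = 0 := by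
          haveI := hsig h
          rw [← integral_condExp (ℱ.le h)]
          rw [integral_congr_ae (hindep m s h hms)]
          simp
        have hIms : Integrable (fun ω => ⟪g m h ω - gradient f (y m h ω),
            g s h ω - gradient f (y s h ω)⟫) μ :=
          integrable_inner_of_memℒp_two (hξL2 m h) (hξL2 s h)
        have hsplit : ∫ ω, ‖Z ω‖ ^ 2 ∂μ
            = ∫ ω, ‖g m h ω - gradient f (y m h ω)‖ ^ 2 ∂μ
              - 2 * ∫ ω, ⟪g m h ω - gradient f (y m h ω),
                  g s h ω - gradient f (y s h ω)⟫ ∂μ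
              + ∫ ω, ‖g s h ω - gradient f (y s h ω)‖ ^ 2 ∂μ := by
          have e : ∀ ω, ‖Z ω‖ ^ 2 = ‖g m h ω - gradient f (y m h ω)‖ ^ 2
              - 2 * ⟪g m h ω - gradient f (y m h ω), g s h ω - gradient f (y s h ω)⟫
              + ‖g s h ω - gradient f (y s h ω)‖ ^ 2 := fun ω => norm_sub_sq_real _ _
          rw [integral_congr_ae (Filter.Eventually.of_forall e)]
          have hA : Integrable (fun ω => ‖g m h ω - gradient f (y m h ω)‖ ^ 2
              - 2 * ⟪g m h ω - gradient f (y m h ω), g s h ω - gradient f (y s h ω)⟫) μ :=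
            (integrable_norm_sq_of_memℒp_two (hξL2 m h)).sub (hIms.const_mul 2)
          rw [integral_add hA (integrable_norm_sq_of_memℒp_two (hξL2 s h))]
          rw [integral_sub (integrable_norm_sq_of_memℒp_two (hξL2 m h)) (hIms.const_mul 2)]
          rw [integral_const_mul]
        rw [hsplit, hc2]
        have := hvar m h
        have := hvar s h
        linarith
      have hsplit2 : ∫ ω, ‖y m (h+1) ω - y s (h+1) ω‖ ^ 2 ∂μ
          = ∫ ω, ‖W ω‖ ^ 2 ∂μ - 2 * (η * ∫ ω, ⟪W ω, Z ω⟫ ∂μ)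
            + η ^ 2 * ∫ ω, ‖Z ω‖ ^ 2 ∂μ := by
        have e : ∀ ω, ‖y m (h+1) ω - y s (h+1) ω‖ ^ 2
            = ‖W ω‖ ^ 2 - 2 * (η * ⟪W ω, Z ω⟫) + η ^ 2 * ‖Z ω‖ ^ 2 := by
          intro ω
          have : y m (h+1) ω - y s (h+1) ω = W ω - η • Z ω := congrFun hdiffrec ω
          rw [this, norm_sub_sq_real, real_inner_smul_right, norm_smul, Real.norm_eq_abs,
            mul_pow, sq_abs]
        rw [integral_congr_ae (Filter.Eventually.of_forall e)]
        have hB1 : Integrable (fun ω => ‖W ω‖ ^ 2 - 2 * (η * ⟪W ω, Z ω⟫)) μ :=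
          hint_W.sub ((hint_WZ.const_mul η).const_mul 2)
        rw [integral_add hB1 (hint_Z.const_mul (η ^ 2))]
        rw [integral_sub hint_W ((hint_WZ.const_mul η).const_mul 2)]
        rw [integral_const_mul, integral_const_mul, integral_const_mul]
      constructor
      · rw [hdiffrec]
        exact hWmem.sub (hZmem.const_smul η)
      · rw [hsplit2, hcross]
        have h1 : η ^ 2 * ∫ ω, ‖Z ω‖ ^ 2 ∂μ ≤ η ^ 2 * (2 * σ ^ 2) :=
          mul_le_mul_of_nonneg_left hZle (sq_nonneg η)
        have h2 : ∫ ω, ‖W ω‖ ^ 2 ∂μ ≤ 2 * η ^ 2 * σ ^ 2 * h := le_trans hWle ihint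
        push_cast
        linarith
  intro h
  have hIint : ∀ m : Fin M, ∀ s : Fin M,
      Integrable (fun ω => ‖y m h ω - y s h ω‖ ^ 2) μ :=
    fun m s => integrable_norm_sq_of_memℒp_two (key h m s).1
  have hM2 : ((M : ℝ) ^ 2) ≠ 0 := by positivity
  calc ∫ ω, ((M : ℝ) ^ 2)⁻¹ * ∑ m, ∑ s, ‖y m h ω - y s h ω‖ ^ 2 ∂μ
      = ((M : ℝ) ^ 2)⁻¹ * ∫ ω, ∑ m, ∑ s, ‖y m h ω - y s h ω‖ ^ 2 ∂μ :=
        integral_const_mul _ _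
    _ = ((M : ℝ) ^ 2)⁻¹ * ∑ m, ∑ s, ∫ ω, ‖y m h ω - y s h ω‖ ^ 2 ∂μ := by
        rw [integral_finset_sum _ (fun m _ => integrable_finset_sum _ (fun s _ => hIint m s))]
        congr 1
        exact Finset.sum_congr rfl fun m _ => integral_finset_sum _ (fun s _ => hIint m s)
    _ ≤ ((M : ℝ) ^ 2)⁻¹ * ∑ m : Fin M, ∑ s : Fin M, (2 * η ^ 2 * σ ^ 2 * h) := by
        have hnn : (0:ℝ) ≤ ((M : ℝ) ^ 2)⁻¹ := by positivity
        refine mul_le_mul_of_nonneg_left ?_ hnn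
        refine Finset.sum_le_sum fun m _ => Finset.sum_le_sum fun s _ => ?_
        exact (key h m s).2
    _ = ((M : ℝ) ^ 2)⁻¹ * ((M : ℝ) ^ 2 * (2 * η ^ 2 * σ ^ 2 * h)) := by
        simp only [Finset.sum_const, Finset.card_univ, Fintype.card_fin, nsmul_eq_mul]
        ring
    _ = 2 * η ^ 2 * σ ^ 2 * h := by
        rw [← mul_assoc, inv_mul_cancel₀ hM2, one_mul]
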